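/- If α ∈ Ω(R⁺) is fixed by some reflection r_e with e ∈ R⁺ (i.e., r_e·α = α), then the fiber ω⁻¹(α) has more than one element. Consequently, if ω⁻¹(α) is a singleton, then r_e·α ≠ α for every positive root e. -/

import Mathlib

/-- If a weight `α ∈ Ω(R⁺)` (i.e. `α = ω(σ)` for some `σ ⊆ R⁺`) is fixed by a
reflection `r_e` with `e ∈ R⁺`, then the fiber `ω⁻¹(α)` has more than one
element; consequently, if the fiber is a singleton then `r_e·α ≠ α` for every
positive root `e`.  Here `ω(σ) = ϱ − Σ_{f∈σ} f`, and for each `e ∈ R⁺` the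
reflection `r e` sends `e` to `−e`, is an involution, and maps positive roots
to roots. -/
theorem reflection_fixed_weight_fiber_not_singleton
    {G V : Type*} [Group G] [AddCommGroup V] [Module ℝ V]
    [DistribMulAction G V] [SMulCommClass G ℝ V] [DecidableEq V]
    (Rp : Finset V)
    (hdisj : ∀ v ∈ Rp, -v ∉ Rp)
    (r : V → G)
    (hre : ∀ e ∈ Rp, r e • e = -e)
    (hinvol : ∀ e ∈ Rp, ∀ v : V, r e • r e • v = v)
    (hinv : ∀ e ∈ Rp, ∀ f ∈ Rp, r e • f ∈ Rp ∨ -(r e • f) ∈ Rp)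
    (ϱ : V) (hϱ : ϱ = (2⁻¹ : ℝ) • ∑ f ∈ Rp, f)
    (ω : Finset V → V) (hω : ∀ σ, ω σ = ϱ - ∑ f ∈ σ, f)
    (α : V) (hα : ∃ σ : Finset V, σ ⊆ Rp ∧ ω σ = α) :
    (∀ e ∈ Rp, r e • α = α →
      ∃ σ τ : Finset V, σ ⊆ Rp ∧ τ ⊆ Rp ∧ σ ≠ τ ∧ ω σ = α ∧ ω τ = α) ∧
    ((∃! σ : Finset V, σ ⊆ Rp ∧ ω σ = α) → ∀ e ∈ Rp, r e • α ≠ α) := by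
  obtain ⟨σ, hσ, hωσ⟩ := hα
  -- key computation: ω τ = -(½ • sum over the signed set of τ)
  have key : ∀ τ : Finset V, τ ⊆ Rp →
      ω τ = -((2⁻¹ : ℝ) • ∑ g ∈ τ ∪ (Rp \ τ).image (fun v => -v), g) := by
    intro τ hτ
    have hdis : Disjoint τ ((Rp \ τ).image (fun v => -v)) := by
      rw [Finset.disjoint_right]
      intro x hx hx'
      obtain ⟨f, hf, rfl⟩ := Finset.mem_image.mp hx
      exact hdisj f (Finset.mem_sdiff.mp hf).1 (hτ hx')
    rw [Finset.sum_union hdis,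
      Finset.sum_image (fun a _ b _ h => neg_injective h)]
    have hsplit : ∑ f ∈ Rp \ τ, f + ∑ f ∈ τ, f = ∑ f ∈ Rp, f :=
      Finset.sum_sdiff hτ
    rw [hω, hϱ, ← hsplit]
    rw [show (∑ x ∈ Rp \ τ, -x) = -∑ x ∈ Rp \ τ, x from Finset.sum_neg_distrib (fun x => x)]
    module
  have main : ∀ e ∈ Rp, r e • α = α →
      ∃ σ τ : Finset V, σ ⊆ Rp ∧ τ ⊆ Rp ∧ σ ≠ τ ∧ ω σ = α ∧ ω τ = α := by
    intro e he hfix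
    have hinj : Function.Injective (fun v : V => r e • v) := by
      intro x y hxy
      have h2 := congrArg (fun v => r e • v) hxy
      simpa [hinvol e he] using h2
    set S : Finset V := σ ∪ (Rp \ σ).image (fun v => -v) with hS
    set T : Finset V := S.image (fun v => r e • v) with hT
    set τ : Finset V := T ∩ Rp with hτdef
    have hτRp : τ ⊆ Rp := Finset.inter_subset_right
    -- no pair {x, -x} inside S
    have hSnp : ∀ x ∈ S, -x ∉ S := by
      intro x hx hnx
      rcases Finset.mem_union.mp hx with hx1 | hx1 <;>
        rcases Finset.mem_union.mp hnx with hx2 | hx2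
      · exact hdisj x (hσ hx1) (hσ hx2)
      · obtain ⟨f, hf, hfx⟩ := Finset.mem_image.mp hx2
        have hfx' : f = x := neg_injective hfx
        exact (Finset.mem_sdiff.mp hf).2 (hfx' ▸ hx1)
      · obtain ⟨f, hf, hfx⟩ := Finset.mem_image.mp hx1
        have hfx' : f = -x := neg_eq_iff_eq_neg.mp hfx
        exact (Finset.mem_sdiff.mp hf).2 (by rw [hfx']; exact hx2)
      · obtain ⟨f, hf, hfx⟩ := Finset.mem_image.mp hx1
        obtain ⟨g, hg, hgx⟩ := Finset.mem_image.mp hx2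
        have hg' : g = x := neg_injective hgx
        have hfRp : -f ∈ Rp := by
          rw [hfx, ← hg']; exact (Finset.mem_sdiff.mp hg).1
        exact hdisj f (Finset.mem_sdiff.mp hf).1 hfRp
    -- no pair {x, -x} inside T
    have hTnp : ∀ x ∈ T, -x ∉ T := by
      intro x hx hnx
      obtain ⟨s, hs, rfl⟩ := Finset.mem_image.mp hx
      obtain ⟨s', hs', hs'x⟩ := Finset.mem_image.mp hnx
      have : s' = -s := hinj (by simpa [smul_neg] using hs'x)
      exact hSnp s hs (this ▸ hs')
    -- every element of T is a root up to sign
    have hTsub : ∀ x ∈ T, x ∈ Rp ∨ -x ∈ Rp := by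
      intro x hx
      obtain ⟨s, hs, rfl⟩ := Finset.mem_image.mp hx
      rcases Finset.mem_union.mp hs with hs1 | hs1
      · exact hinv e he s (hσ hs1)
      · obtain ⟨f, hf, rfl⟩ := Finset.mem_image.mp hs1
        rcases hinv e he f (Finset.mem_sdiff.mp hf).1 with h | h
        · right; simpa [smul_neg] using h
        · left; simpa [smul_neg] using h
    -- cardinalities
    have hcardS : S.card = Rp.card := by
      have hdis : Disjoint σ ((Rp \ σ).image (fun v => -v)) := by
        rw [Finset.disjoint_right]
        intro x hx hx'
        obtain ⟨f, hf, rfl⟩ := Finset.mem_image.mp hx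
        exact hdisj f (Finset.mem_sdiff.mp hf).1 (hσ hx')
      rw [hS, Finset.card_union_of_disjoint hdis,
        Finset.card_image_of_injective _ neg_injective, add_comm,
        Finset.card_sdiff_add_card_eq_card hσ]
    have hcardT : T.card = Rp.card := by
      rw [hT, Finset.card_image_of_injective _ hinj, hcardS]
    -- surjectivity of the "positive part" map
    have hsurj : ∀ f ∈ Rp, f ∈ T ∨ -f ∈ T := by
      have hinjOn : Set.InjOn (fun g => if g ∈ Rp then g else -g) T := by
        intro g hg g' hg' h
        by_cases h1 : g ∈ Rp <;> by_cases h2 : g' ∈ Rp <;>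
          simp only [h1, h2, if_pos, if_neg, if_true, if_false] at h
        · exact h
        · exact absurd (h ▸ hg) (hTnp g' hg')
        · exact absurd (h.symm ▸ hg') (hTnp g hg)
        · exact neg_injective h
      have hsub : T.image (fun g => if g ∈ Rp then g else -g) ⊆ Rp := by
        intro x hx
        obtain ⟨g, hg, rfl⟩ := Finset.mem_image.mp hx
        by_cases h1 : g ∈ Rp
        · simp [h1]
        · rcases hTsub g hg with h | h
          · exact absurd h h1
          · simpa [h1] using h
      have heq : T.image (fun g => if g ∈ Rp then g else -g) = Rp := by
        apply Finset.eq_of_subset_of_card_le hsub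
        rw [Finset.card_image_of_injOn hinjOn, hcardT]
      intro f hf
      rw [← heq] at hf
      obtain ⟨g, hg, hgf⟩ := Finset.mem_image.mp hf
      by_cases h1 : g ∈ Rp
      · left; rw [if_pos h1] at hgf; exact hgf ▸ hg
      · right
        rw [if_neg h1] at hgf
        have : g = -f := by rw [← hgf, neg_neg]
        exact this ▸ hg
    -- T is the signed set of τ
    have hTeq : T = τ ∪ (Rp \ τ).image (fun v => -v) := by
      ext x
      constructor
      · intro hx
        by_cases h1 : x ∈ Rp
        · exact Finset.mem_union_left _ (Finset.mem_inter.mpr ⟨hx, h1⟩)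
        · rcases hTsub x hx with h | h
          · exact absurd h h1
          · apply Finset.mem_union_right
            apply Finset.mem_image.mpr
            refine ⟨-x, Finset.mem_sdiff.mpr ⟨h, ?_⟩, neg_neg x⟩
            intro hc
            exact hTnp x hx (Finset.mem_inter.mp hc).1
      · intro hx
        rcases Finset.mem_union.mp hx with h | h
        · exact (Finset.mem_inter.mp h).1
        · obtain ⟨f, hf, rfl⟩ := Finset.mem_image.mp h
          obtain ⟨hf1, hf2⟩ := Finset.mem_sdiff.mp hf
          rcases hsurj f hf1 with h' | h'
          · exact absurd (Finset.mem_inter.mpr ⟨h', hf1⟩) hf2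
          · exact h'
    -- ω τ = α
    have hωτ : ω τ = α := by
      have h1 : ω σ = -((2⁻¹ : ℝ) • ∑ g ∈ S, g) := key σ hσ
      have h2 : ω τ = -((2⁻¹ : ℝ) • ∑ g ∈ T, g) := by
        rw [key τ hτRp, ← hTeq]
      have h3 : ∑ g ∈ T, g = r e • ∑ g ∈ S, g := by
        rw [hT, Finset.sum_image (fun a _ b _ h => hinj h), Finset.smul_sum]
      rw [h2, h3, ← hfix, ← hωσ, h1]
      rw [smul_neg, smul_comm (r e) (2⁻¹:ℝ) (∑ g ∈ S, g)]
    -- σ ≠ τ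
    have hne : σ ≠ τ := by
      by_cases heσ : e ∈ σ
      · intro hc
        have heS : e ∈ S := Finset.mem_union_left _ heσ
        have hneT : -e ∈ T := by
          apply Finset.mem_image.mpr
          exact ⟨e, heS, hre e he⟩
        have heT : e ∉ T := fun h => hTnp e h (by simpa using hneT)
        exact heT ((hc ▸ heσ : e ∈ τ) |> Finset.mem_inter.mp |>.1)
      · intro hc
        have hneS : -e ∈ S := by
          apply Finset.mem_union_right
          exact Finset.mem_image.mpr ⟨e, Finset.mem_sdiff.mpr ⟨he, heσ⟩, rfl⟩
        have heT : e ∈ T := by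
          apply Finset.mem_image.mpr
          exact ⟨-e, hneS, by rw [smul_neg, hre e he, neg_neg]⟩
        exact heσ (hc ▸ Finset.mem_inter.mpr ⟨heT, he⟩)
    exact ⟨σ, τ, hσ, hτRp, hne, hωσ, hωτ⟩
  refine ⟨main, ?_⟩
  rintro ⟨u, hu, huniq⟩ e he hfix
  obtain ⟨σ1, τ1, h1, h2, h3, h4, h5⟩ := main e he hfix
  exact h3 ((huniq σ1 ⟨h1, h4⟩).trans (huniq τ1 ⟨h2, h5⟩).symm)
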